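/- Let U, V be neighborhoods of 0 in C and F : U → V a C^1 diffeomorphism with F(0) = 0 whose derivative at 0 is an invertible C-linear map T. If B ⊆ U is closed and F(B) is asymptotically ρ-self-similar about 0 with limit model A, then B is asymptotically ρ-self-similar about 0 with limit model T^{-1}(A). -/

import Mathlib

open Pointwise

/-- Truncation: X_r = (X ∩ D_r) ∪ ∂D_r. -/
noncomputable def trunc (r : ℝ) (X : Set ℂ) : Set ℂ :=
  (X ∩ Metric.closedBall 0 r) ∪ Metric.sphere (0 : ℂ) r

/-- B is asymptotically ρ-self-similar about 0 with limit model A. -/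
def AsympSelfSimilar (ρ : ℂ) (A B : Set ℂ) : Prop :=
  ∃ r > 0, Filter.Tendsto
    (fun n : ℕ => Metric.hausdorffDist (trunc r ((ρ ^ n) • B)) (trunc r A))
    Filter.atTop (nhds 0)

open Metric Set Filter

lemma trunc_nonempty {r : ℝ} (hr : 0 < r) (X : Set ℂ) : (trunc r X).Nonempty :=
  ⟨(r : ℂ), Or.inr (by simp [mem_sphere_iff_norm, abs_of_pos hr])⟩

lemma trunc_subset_closedBall {r : ℝ} {X : Set ℂ} : trunc r X ⊆ Metric.closedBall 0 r :=
  union_subset inter_subset_right sphere_subset_closedBall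

lemma trunc_edist_ne_top {r : ℝ} (hr : 0 < r) (X Y : Set ℂ) :
    EMetric.hausdorffEdist (trunc r X) (trunc r Y) ≠ ⊤ :=
  Metric.hausdorffEdist_ne_top_of_nonempty_of_bounded (trunc_nonempty hr X) (trunc_nonempty hr Y)
    (Metric.isBounded_closedBall.subset trunc_subset_closedBall)
    (Metric.isBounded_closedBall.subset trunc_subset_closedBall)

lemma exists_trunc_close {r ε : ℝ} (hr : 0 < r) {X : Set ℂ} {x y : ℂ}
    (hx : ‖x‖ ≤ r) (hy : y ∈ X) (hxy : dist x y ≤ ε) :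
    ∃ z ∈ trunc r X, dist x z ≤ 2 * ε := by
  have hε : 0 ≤ ε := le_trans dist_nonneg hxy
  by_cases h : ‖y‖ ≤ r
  · exact ⟨y, Or.inl ⟨hy, by simpa [Metric.mem_closedBall, dist_zero_right] using h⟩,
      by linarith⟩
  · push_neg at h
    have hy0 : (0:ℝ) < ‖y‖ := lt_trans hr h
    have hq : (0:ℝ) ≤ 1 - r / ‖y‖ := by
      rw [sub_nonneg]; exact (div_le_one hy0).mpr h.le
    refine ⟨(r / ‖y‖ : ℝ) • y, Or.inr ?_, ?_⟩
    · simp only [mem_sphere_iff_norm, sub_zero, norm_smul, Real.norm_eq_abs,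
        abs_of_pos (div_pos hr hy0)]
      field_simp
    · have h1 : dist y ((r / ‖y‖ : ℝ) • y) = ‖y‖ - r := by
        rw [dist_eq_norm]
        have e1 : y - (r / ‖y‖ : ℝ) • y = ((1 - r / ‖y‖ : ℝ)) • y := by
          rw [sub_smul, one_smul]
        rw [e1, norm_smul, Real.norm_eq_abs, abs_of_nonneg hq, sub_mul, one_mul,
          div_mul_cancel₀ _ hy0.ne']
      have h2 : ‖y‖ - ‖x‖ ≤ dist x y := by
        rw [dist_comm, dist_eq_norm]; exact norm_sub_norm_le y x
      have h3 := dist_triangle x y ((r / ‖y‖ : ℝ) • y)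
      linarith

lemma hausdorffDist_trunc_le {r ε : ℝ} (hr : 0 < r) (hε : 0 ≤ ε) {X Y : Set ℂ}
    (hXY : ∀ x ∈ X, ‖x‖ ≤ r → ∃ y ∈ Y, dist x y ≤ ε)
    (hYX : ∀ y ∈ Y, ‖y‖ ≤ r → ∃ x ∈ X, dist x y ≤ ε) :
    Metric.hausdorffDist (trunc r X) (trunc r Y) ≤ 2 * ε := by
  apply Metric.hausdorffDist_le_of_mem_dist (by linarith)
  · rintro x (⟨hxX, hxb⟩ | hxs)
    · have hx : ‖x‖ ≤ r := by simpa [Metric.mem_closedBall, dist_zero_right] using hxb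
      obtain ⟨y, hy, hd⟩ := hXY x hxX hx
      exact exists_trunc_close hr hx hy hd
    · exact ⟨x, Or.inr hxs, by simp only [dist_self]; positivity⟩
  · rintro y (⟨hyY, hyb⟩ | hys)
    · have hy : ‖y‖ ≤ r := by simpa [Metric.mem_closedBall, dist_zero_right] using hyb
      obtain ⟨x, hx, hd⟩ := hYX y hyY hy
      obtain ⟨z, hz, hdz⟩ := exists_trunc_close (ε := ε) hr hy hx (by rwa [dist_comm])
      exact ⟨z, hz, hdz⟩
    · exact ⟨y, Or.inr hys, by simp only [dist_self]; positivity⟩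

lemma trunc_smul {c : ℂ} (hc : c ≠ 0) {r : ℝ} (hr : 0 ≤ r) (X : Set ℂ) :
    trunc (‖c‖ * r) (c • X) = c • trunc r X := by
  unfold trunc
  rw [Set.smul_set_union, Set.smul_set_inter₀ hc, smul_closedBall c _ hr, smul_sphere c _ hr,
    smul_zero]

lemma small_preimage (U : Set ℂ) (hU : U ∈ nhds 0) (F : ℂ → ℂ)
    (hF : ContDiffOn ℝ 1 F U) (hinj : Set.InjOn F U) (hF0 : F 0 = 0)
    (T : ℂ) (hT : T ≠ 0) (hderiv : HasDerivAt F T 0) :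
    ∀ s > 0, ∃ t > 0, ∀ b ∈ U, ‖F b‖ < t → ‖b‖ < s := by
  have hcd : ContDiffAt ℝ 1 F 0 := hF.contDiffAt hU
  set L : ℂ →L[ℝ] ℂ := (ContinuousLinearMap.smulRight (1 : ℂ →L[ℂ] ℂ) T).restrictScalars ℝ with hL
  set L' : ℂ →L[ℝ] ℂ :=
    (ContinuousLinearMap.smulRight (1 : ℂ →L[ℂ] ℂ) T⁻¹).restrictScalars ℝ with hL'
  set e : ℂ ≃L[ℝ] ℂ := ContinuousLinearEquiv.equivOfInverse L L'
    (fun x => by simp [hL, hL', smul_eq_mul, mul_assoc, mul_inv_cancel₀ hT])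
    (fun x => by simp [hL, hL', smul_eq_mul, mul_assoc, inv_mul_cancel₀ hT]) with he
  have hfd : HasFDerivAt F (e : ℂ →L[ℝ] ℂ) 0 := hderiv.hasFDerivAt.restrictScalars ℝ
  set P := hcd.toOpenPartialHomeomorph F hfd one_ne_zero with hP
  have hPcoe : (P : ℂ → ℂ) = F := hcd.toOpenPartialHomeomorph_coe hfd one_ne_zero
  have h0P : (0:ℂ) ∈ P.source := hcd.mem_toOpenPartialHomeomorph_source hfd one_ne_zero
  intro s hs
  set W : Set ℂ := P.source ∩ Metric.ball 0 s ∩ interior U with hW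
  have hWopen : IsOpen W := ((P.open_source.inter Metric.isOpen_ball).inter isOpen_interior)
  have h0W : (0:ℂ) ∈ W :=
    ⟨⟨h0P, Metric.mem_ball_self hs⟩, mem_interior_iff_mem_nhds.mpr hU⟩
  have himgopen : IsOpen (P '' W) :=
    P.isOpen_image_of_subset_source hWopen (fun x hx => hx.1.1)
  have h0img : (0:ℂ) ∈ P '' W := ⟨0, h0W, by rw [hPcoe]; exact hF0⟩
  obtain ⟨t, ht, htsub⟩ := Metric.isOpen_iff.mp himgopen 0 h0img
  refine ⟨t, ht, fun b hb hFb => ?_⟩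
  have : F b ∈ P '' W := htsub (by simpa [Metric.mem_ball, dist_zero_right] using hFb)
  obtain ⟨b', hb'W, hb'eq⟩ := this
  rw [hPcoe] at hb'eq
  have hb'U : b' ∈ U := interior_subset hb'W.2
  have : b' = b := hinj hb'U hb hb'eq
  rw [← this]
  simpa [Metric.mem_ball, dist_zero_right] using hb'W.1.2


/-- Tan Lei's Lemma: if F is a C¹ diffeomorphism fixing 0 with ℂ-linear
derivative T at 0, and F(B) is asymptotically ρ-self-similar about 0 with
limit model A, then B is asymptotically ρ-self-similar about 0 with limit
model T⁻¹(A). -/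
theorem asymp_self_similar_pullback (U V : Set ℂ)
    (hU : U ∈ nhds (0 : ℂ)) (hV : V ∈ nhds (0 : ℂ))
    (F : ℂ → ℂ) (hF : ContDiffOn ℝ 1 F U) (hinj : Set.InjOn F U)
    (himg : F '' U = V) (hF0 : F 0 = 0)
    (T : ℂ) (hT : T ≠ 0) (hderiv : HasDerivAt F T 0)
    (ρ : ℂ) (hρ : 1 < ‖ρ‖)
    (B : Set ℂ) (hB : IsClosed B) (hBU : B ⊆ U)
    (A : Set ℂ) (hFB : AsympSelfSimilar ρ A (F '' B)) :
    AsympSelfSimilar ρ (T⁻¹ • A) B := by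
  obtain ⟨r₀, hr₀, htend⟩ := hFB
  have hT' : (0:ℝ) < ‖T‖ := norm_pos_iff.mpr hT
  have hTinv : T⁻¹ ≠ 0 := inv_ne_zero hT
  have hTinv' : (0:ℝ) < ‖T⁻¹‖ := norm_pos_iff.mpr hTinv
  have hni : ‖T⁻¹‖ = ‖T‖⁻¹ := norm_inv T
  obtain ⟨r', hr'def⟩ : ∃ x : ℝ, x = ‖T⁻¹‖ * r₀ := ⟨_, rfl⟩
  have hr' : 0 < r' := hr'def ▸ mul_pos hTinv' hr₀
  obtain ⟨C, hC⟩ : ∃ S : Set ℂ, S = T⁻¹ • (F '' B) := ⟨_, rfl⟩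
  have hnormρ : 1 < ‖ρ‖ := by exact hρ
  have hρn : ∀ n : ℕ, (0:ℝ) < ‖ρ‖ ^ n := fun n => pow_pos (lt_trans one_pos hnormρ) n
  refine ⟨r', hr', ?_⟩
  rw [Metric.tendsto_atTop]
  intro ε hεpos
  obtain ⟨ε', hε'def⟩ : ∃ x : ℝ, x = ε / 8 := ⟨_, rfl⟩
  have hε'pos : 0 < ε' := by rw [hε'def]; positivity
  obtain ⟨δ, hδdef⟩ : ∃ x : ℝ, x = min (‖T‖ / 2) (ε' / (2 * r' * ‖T⁻¹‖)) := ⟨_, rfl⟩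
  have hδpos : 0 < δ := by rw [hδdef]; exact lt_min (by positivity) (by positivity)
  have hδ1 : δ ≤ ‖T‖ / 2 := hδdef ▸ min_le_left _ _
  have hδ2 : δ ≤ ε' / (2 * r' * ‖T⁻¹‖) := hδdef ▸ min_le_right _ _
  have hkey : ‖T⁻¹‖ * δ * (2 * r') ≤ ε' := by
    have h7 := mul_le_mul_of_nonneg_left hδ2 hTinv'.le
    have h8 := mul_le_mul_of_nonneg_right h7 (by positivity : (0:ℝ) ≤ 2 * r')
    have hne : (2 * r' * ‖T⁻¹‖) ≠ 0 := by positivity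
    have heq : ‖T⁻¹‖ * (ε' / (2 * r' * ‖T⁻¹‖)) * (2 * r') = ε' := by
      rw [show ‖T⁻¹‖ * (ε' / (2 * r' * ‖T⁻¹‖)) * (2 * r')
          = ε' / (2 * r' * ‖T⁻¹‖) * (2 * r' * ‖T⁻¹‖) from by ring,
        div_mul_cancel₀ _ hne]
    linarith
  -- little-o estimate
  have hlo := (hasDerivAt_iff_isLittleO.mp hderiv).def hδpos
  simp only [hF0, sub_zero, smul_eq_mul] at hlo
  obtain ⟨η, hηpos, hη⟩ := Metric.eventually_nhds_iff.mp hlo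
  obtain ⟨t, htpos, ht⟩ := small_preimage U hU F hF hinj hF0 T hT hderiv η hηpos
  have hpow := tendsto_pow_atTop_atTop_of_one_lt hnormρ
  have hev1 : ∀ᶠ n : ℕ in atTop, r' / η < ‖ρ‖ ^ n := hpow.eventually_gt_atTop _
  have hev2 : ∀ᶠ n : ℕ in atTop, r' / (t * ‖T⁻¹‖) < ‖ρ‖ ^ n := hpow.eventually_gt_atTop _
  have hev3 : ∀ᶠ n : ℕ in atTop,
      Metric.hausdorffDist (trunc r₀ ((ρ ^ n) • (F '' B))) (trunc r₀ A) < ε' * ‖T‖ := by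
    have h9 := Metric.tendsto_nhds.mp htend (ε' * ‖T‖) (by positivity)
    filter_upwards [h9] with n hn
    rw [Real.dist_eq, sub_zero] at hn
    exact lt_of_le_of_lt (le_abs_self _) hn
  obtain ⟨N, hN⟩ := Filter.eventually_atTop.mp ((hev1.and hev2).and hev3)
  refine ⟨N, fun n hn => ?_⟩
  obtain ⟨⟨h1, h2⟩, h3⟩ := hN n hn
  -- the uniform estimate
  have hdist : ∀ b : ℂ, ‖b‖ < η → ‖b‖ ≤ 2 * r' / ‖ρ‖ ^ n →
      dist ((ρ ^ n) • b) ((ρ ^ n) • (T⁻¹ • F b)) ≤ ε' := by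
    intro b hbη hb2
    have hest : ‖F b - b * T‖ ≤ δ * ‖b‖ := hη (by rwa [dist_zero_right])
    have key : b - T⁻¹ * F b = T⁻¹ * (b * T - F b) := by
      rw [mul_sub, mul_comm b T, ← mul_assoc, inv_mul_cancel₀ hT, one_mul]
    have hρne : (‖ρ‖ ^ n) ≠ 0 := (hρn n).ne'
    calc dist ((ρ ^ n) • b) ((ρ ^ n) • (T⁻¹ • F b))
        = ‖(ρ : ℂ) ^ n‖ * dist b (T⁻¹ • F b) := dist_smul₀ _ _ _
      _ = ‖ρ‖ ^ n * ‖b - T⁻¹ * F b‖ := by rw [norm_pow, dist_eq_norm, smul_eq_mul]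
      _ = ‖ρ‖ ^ n * (‖T⁻¹‖ * ‖F b - b * T‖) := by rw [key, norm_mul, norm_sub_rev]
      _ ≤ ‖ρ‖ ^ n * (‖T⁻¹‖ * (δ * ‖b‖)) := by gcongr
      _ ≤ ‖ρ‖ ^ n * (‖T⁻¹‖ * (δ * (2 * r' / ‖ρ‖ ^ n))) := by gcongr
      _ = ‖ρ‖ ^ n / ‖ρ‖ ^ n * (‖T⁻¹‖ * δ * (2 * r')) := by ring
      _ = ‖T⁻¹‖ * δ * (2 * r') := by rw [div_self hρne, one_mul]
      _ ≤ ε' := hkey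
  have piece1 : Metric.hausdorffDist (trunc r' ((ρ ^ n) • B)) (trunc r' ((ρ ^ n) • C))
      ≤ 2 * ε' := by
    apply hausdorffDist_trunc_le hr' hε'pos.le
    · intro x hx hxnorm
      obtain ⟨b, hbB, rfl⟩ := Set.mem_smul_set.mp hx
      have hxn : ‖(ρ ^ n) • b‖ = ‖ρ‖ ^ n * ‖b‖ := by rw [norm_smul, norm_pow]
      have hb1 : ‖b‖ ≤ r' / ‖ρ‖ ^ n := by
        rw [le_div_iff₀ (hρn n), mul_comm]; rwa [hxn] at hxnorm
      have hbη : ‖b‖ < η := by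
        rw [div_lt_iff₀ hηpos] at h1
        exact lt_of_le_of_lt hb1 (by rw [div_lt_iff₀ (hρn n)]; linarith)
      have hb2 : ‖b‖ ≤ 2 * r' / ‖ρ‖ ^ n :=
        le_trans hb1 ((div_le_div_iff_of_pos_right (hρn n)).mpr (by linarith))
      refine ⟨(ρ ^ n) • (T⁻¹ • F b), ?_, hdist b hbη hb2⟩
      apply Set.smul_mem_smul_set
      rw [hC]
      exact Set.smul_mem_smul_set (Set.mem_image_of_mem F hbB)
    · intro y hy hynorm
      obtain ⟨c, hcC, rfl⟩ := Set.mem_smul_set.mp hy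
      rw [hC] at hcC
      obtain ⟨w, hw, rfl⟩ := Set.mem_smul_set.mp hcC
      obtain ⟨b, hbB, rfl⟩ := hw
      have hx' : ‖ρ‖ ^ n * (‖T⁻¹‖ * ‖F b‖) ≤ r' := by
        rwa [norm_smul, norm_smul, norm_pow] at hynorm
      have hFbt : ‖F b‖ < t := by
        rw [div_lt_iff₀ (by positivity)] at h2
        have h10 : (‖ρ‖ ^ n * ‖T⁻¹‖) * ‖F b‖ < (‖ρ‖ ^ n * ‖T⁻¹‖) * t := by
          calc (‖ρ‖ ^ n * ‖T⁻¹‖) * ‖F b‖ = ‖ρ‖ ^ n * (‖T⁻¹‖ * ‖F b‖) := by ring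
            _ ≤ r' := hx'
            _ < ‖ρ‖ ^ n * (t * ‖T⁻¹‖) := h2
            _ = (‖ρ‖ ^ n * ‖T⁻¹‖) * t := by ring
        exact lt_of_mul_lt_mul_left h10 (mul_pos (hρn n) hTinv').le
      have hbη : ‖b‖ < η := ht b (hBU hbB) hFbt
      have hest : ‖F b - b * T‖ ≤ δ * ‖b‖ := hη (by rwa [dist_zero_right])
      have e1 : ‖b‖ * ‖T‖ ≤ ‖F b‖ + δ * ‖b‖ := by
        have h5 := norm_sub_norm_le (b * T) (F b)
        rw [norm_mul] at h5
        have h6 : ‖b * T - F b‖ = ‖F b - b * T‖ := norm_sub_rev _ _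
        linarith
      have hTT : ‖T‖ * ‖T⁻¹‖ = 1 := by rw [hni, mul_inv_cancel₀ hT'.ne']
      have e2 : ‖b‖ * ‖T‖ ≤ 2 * ‖F b‖ := by
        have h11 := mul_le_mul_of_nonneg_right hδ1 (norm_nonneg b)
        linarith
      have hb_le : ‖b‖ ≤ 2 * ‖F b‖ * ‖T⁻¹‖ := by
        have h12 := mul_le_mul_of_nonneg_right e2 hTinv'.le
        have h13 : ‖b‖ * (‖T‖ * ‖T⁻¹‖) = ‖b‖ := by rw [hTT, mul_one]
        linarith
      have e3' : ‖F b‖ * (‖ρ‖ ^ n * ‖T⁻¹‖) ≤ r' := by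
        rw [show ‖F b‖ * (‖ρ‖ ^ n * ‖T⁻¹‖) = ‖ρ‖ ^ n * (‖T⁻¹‖ * ‖F b‖) from by ring]
        exact hx'
      have hb2 : ‖b‖ ≤ 2 * r' / ‖ρ‖ ^ n := by
        rw [le_div_iff₀ (hρn n)]
        have h14 := mul_le_mul_of_nonneg_right hb_le (hρn n).le
        linarith
      exact ⟨(ρ ^ n) • b, Set.smul_mem_smul_set hbB, hdist b hbη hb2⟩
  have E : (ρ ^ n) • C = T⁻¹ • ((ρ ^ n) • (F '' B)) := by
    rw [hC, smul_smul, smul_smul, mul_comm]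
  have E1 : trunc r' ((ρ ^ n) • C) = T⁻¹ • trunc r₀ ((ρ ^ n) • (F '' B)) := by
    rw [E, hr'def, trunc_smul hTinv hr₀.le]
  have E2 : trunc r' (T⁻¹ • A) = T⁻¹ • trunc r₀ A := by
    rw [hr'def, trunc_smul hTinv hr₀.le]
  have piece2 : Metric.hausdorffDist (trunc r' ((ρ ^ n) • C)) (trunc r' (T⁻¹ • A)) ≤ ε' := by
    rw [E1, E2]
    apply Metric.hausdorffDist_le_of_mem_dist hε'pos.le
    · intro x hx
      obtain ⟨s, hs, rfl⟩ := Set.mem_smul_set.mp hx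
      obtain ⟨y, hy, hd⟩ :=
        Metric.exists_dist_lt_of_hausdorffDist_lt hs h3 (trunc_edist_ne_top hr₀ _ _)
      refine ⟨T⁻¹ • y, Set.smul_mem_smul_set hy, ?_⟩
      rw [dist_smul₀, hni, inv_mul_le_iff₀ hT']
      linarith [hd, dist_comm (α := ℂ) s y]
    · intro y hy
      obtain ⟨s, hs, rfl⟩ := Set.mem_smul_set.mp hy
      obtain ⟨x, hx, hd⟩ :=
        Metric.exists_dist_lt_of_hausdorffDist_lt' hs h3 (trunc_edist_ne_top hr₀ _ _)
      refine ⟨T⁻¹ • x, Set.smul_mem_smul_set hx, ?_⟩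
      rw [dist_smul₀, hni, inv_mul_le_iff₀ hT']
      linarith [hd, dist_comm (α := ℂ) s x]
  have tri := Metric.hausdorffDist_triangle (t := trunc r' ((ρ ^ n) • C))
    (u := trunc r' (T⁻¹ • A))
    (trunc_edist_ne_top hr' ((ρ ^ n) • B) ((ρ ^ n) • C))
  rw [Real.dist_eq, sub_zero, abs_of_nonneg Metric.hausdorffDist_nonneg]
  calc Metric.hausdorffDist (trunc r' ((ρ ^ n) • B)) (trunc r' (T⁻¹ • A))
      ≤ _ + _ := tri
    _ ≤ 2 * ε' + ε' := add_le_add piece1 piece2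
    _ < ε := by rw [hε'def]; linarith
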